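/- Fix 0 < δ ≤ 1. Then ∑_{n ≤ X} ψ_{a,b}(n) = Ψ(a,b)·X + O_δ(σ_{-δ}(ab)·X^δ), where Ψ(a,b) = φ*(b)·φ♭(a)/φ♭(gcd(a,b)) and σ_{-δ}(m) = ∑_{k|m} k^{-δ}. -/

import Mathlib

open Finset

noncomputable def phiStar (n : ℕ) : ℝ := ∏ p ∈ n.primeFactors, (1 - 1 / (p : ℝ))

noncomputable def phiCirc (n : ℕ) : ℝ :=
  ∏ p ∈ n.primeFactors.erase 2, (1 - 1 / ((p : ℝ) - 1))

noncomputable def phiFlat (n : ℕ) : ℝ :=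
  ∏ p ∈ n.primeFactors.erase 2, (1 + 1 / ((p : ℝ) * ((p : ℝ) - 2)))

noncomputable def psiab (a b n : ℕ) : ℝ :=
  if Nat.gcd n b = 1 then (phiCirc (Nat.gcd a n))⁻¹ else 0

noncomputable def PsiMain (a b : ℕ) : ℝ :=
  phiStar b * phiFlat a / phiFlat (Nat.gcd a b)

noncomputable def sigmaNeg (δ : ℝ) (m : ℕ) : ℝ := ∑ k ∈ m.divisors, (k : ℝ) ^ (-δ)


lemma aux_bernoulli {δ : ℝ} (hδ : 0 < δ) (hδ' : δ ≤ 1) {n : ℕ} (hn : 2 ≤ n) :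
    (n:ℝ) ^ (-(1+δ)) ≤ (1/δ) * (((n:ℝ)-1) ^ (-δ) - (n:ℝ) ^ (-δ)) := by
  have hx : (2:ℝ) ≤ (n:ℝ) := by exact_mod_cast hn
  have hx0 : (0:ℝ) < n := by linarith
  set t : ℝ := ((n:ℝ))⁻¹ with ht
  have ht0 : 0 < t := inv_pos.mpr hx0
  have ht2 : t ≤ 1/2 := by
    rw [ht]; rw [inv_le_comm₀ hx0 (by norm_num)] at *; linarith [inv_anti₀ (by norm_num : (0:ℝ)<2) hx]
  have h1 : (1 - t) ^ δ ≤ 1 - δ * t := by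
    have := rpow_one_add_le_one_add_mul_self (s := -t) (by linarith) hδ.le hδ'
    simpa [sub_eq_add_neg, mul_neg] using this
  have hpos : (0:ℝ) < 1 - t := by linarith
  have hdt : 0 < 1 - δ * t := by nlinarith
  have hpd : (0:ℝ) < (1 - t) ^ δ := Real.rpow_pos_of_pos hpos δ
  have h4 : 1 + δ * t ≤ ((1 - t) ^ δ)⁻¹ := by
    rw [le_inv_comm₀ (by nlinarith) hpd]
    calc (1 - t) ^ δ ≤ 1 - δ * t := h1
      _ ≤ (1 + δ*t)⁻¹ := by
        rw [inv_eq_one_div, le_div_iff₀ (by nlinarith)]; nlinarith [sq_nonneg (δ*t)]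
  have h5 : 1 + δ * t ≤ (1 - t) ^ (-δ) := by
    rwa [Real.rpow_neg hpos.le]
  -- now assemble
  have hm : ((n:ℝ) - 1) = (n:ℝ) * (1 - t) := by
    rw [ht, mul_sub, mul_one, mul_inv_cancel₀ hx0.ne']
  have hsplit : (n:ℝ) ^ (-(1+δ)) = (n:ℝ) ^ (-δ) * t := by
    rw [show -(1+δ) = -δ + (-1) by ring, Real.rpow_add hx0, Real.rpow_neg_one]
  have hm2 : ((n:ℝ)-1) ^ (-δ) = (n:ℝ) ^ (-δ) * (1-t) ^ (-δ) := by
    rw [hm, Real.mul_rpow hx0.le hpos.le]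
  have hnd : (0:ℝ) < (n:ℝ) ^ (-δ) := Real.rpow_pos_of_pos hx0 _
  rw [hsplit, hm2]
  have : (n:ℝ)^(-δ) * (δ * t) ≤ (n:ℝ)^(-δ) * ((1-t)^(-δ) - 1) := by
    apply mul_le_mul_of_nonneg_left _ hnd.le
    linarith
  calc (n:ℝ)^(-δ) * t = (1/δ) * ((n:ℝ)^(-δ) * (δ * t)) := by field_simp
    _ ≤ (1/δ) * ((n:ℝ)^(-δ) * ((1-t)^(-δ)-1)) := by
        apply mul_le_mul_of_nonneg_left this (by positivity)
    _ = (1/δ) * ((n:ℝ)^(-δ) * (1-t)^(-δ) - (n:ℝ)^(-δ)) := by ring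

lemma aux_tele {δ : ℝ} (hδ : 0 < δ) (M : ℕ) (hM : 1 ≤ M) :
    ∑ n ∈ Finset.Icc 2 M, (((n:ℝ)-1) ^ (-δ) - (n:ℝ) ^ (-δ)) = 1 - (M:ℝ) ^ (-δ) := by
  induction M, hM using Nat.le_induction with
  | base => simp
  | succ M hM ih =>
      rw [Finset.sum_Icc_succ_top (by omega), ih]
      have h1 : ((M:ℝ)+1) - 1 = (M:ℝ) := by ring
      push_cast
      rw [h1]
      ring

lemma aux_sum_bound {δ : ℝ} (hδ : 0 < δ) (hδ' : δ ≤ 1) (F : Finset ℕ) (hF : ∀ n ∈ F, 2 ≤ n) :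
    ∑ n ∈ F, (n:ℝ) ^ (-(1+δ)) ≤ 1/δ := by
  set M := max 1 (F.sup id) with hM
  have hFsub : F ⊆ Finset.Icc 2 M := by
    intro n hn
    simp only [Finset.mem_Icc]
    exact ⟨hF n hn, le_max_of_le_right (Finset.le_sup (f := id) hn)⟩
  calc ∑ n ∈ F, (n:ℝ) ^ (-(1+δ))
      ≤ ∑ n ∈ Finset.Icc 2 M, (n:ℝ) ^ (-(1+δ)) := by
        apply Finset.sum_le_sum_of_subset_of_nonneg hFsub
        intro i _ _; positivity
    _ ≤ ∑ n ∈ Finset.Icc 2 M, (1/δ) * (((n:ℝ)-1) ^ (-δ) - (n:ℝ) ^ (-δ)) := by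
        apply Finset.sum_le_sum
        intro n hn
        exact aux_bernoulli hδ hδ' (Finset.mem_Icc.mp hn).1
    _ = (1/δ) * (1 - (M:ℝ) ^ (-δ)) := by
        rw [← Finset.mul_sum, aux_tele hδ M (le_max_left 1 _)]
    _ ≤ 1/δ := by
        have h1 : (0:ℝ) ≤ (M:ℝ) ^ (-δ) := by positivity
        have : 1 - (M:ℝ)^(-δ) ≤ 1 := by linarith
        calc (1/δ) * (1 - (M:ℝ)^(-δ)) ≤ (1/δ) * 1 := by
              apply mul_le_mul_of_nonneg_left this (by positivity)
          _ = 1/δ := mul_one _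

lemma aux_prod_A {δ : ℝ} (hδ : 0 < δ) (hδ' : δ ≤ 1) (A : Finset ℕ) (hA : ∀ p ∈ A, 3 ≤ p) :
    ∏ p ∈ A, (1 + 2 * (((p:ℝ))^δ * ((p:ℝ)-2))⁻¹) ≤ Real.exp (6/δ) := by
  have hterm : ∀ p ∈ A, 2 * (((p:ℝ))^δ * ((p:ℝ)-2))⁻¹ ≤ 6 * (p:ℝ) ^ (-(1+δ)) := by
    intro p hp
    have h3 : (3:ℝ) ≤ (p:ℝ) := by exact_mod_cast hA p hp
    have hp0 : (0:ℝ) < p := by linarith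
    have hp2 : (0:ℝ) < (p:ℝ) - 2 := by linarith
    have hpd : (0:ℝ) < (p:ℝ)^δ := Real.rpow_pos_of_pos hp0 δ
    have hsplit : (p:ℝ) ^ (-(1+δ)) = ((p:ℝ)^δ)⁻¹ * (p:ℝ)⁻¹ := by
      rw [show -(1+δ) = -δ + (-1) by ring, Real.rpow_add hp0, Real.rpow_neg_one,
        Real.rpow_neg hp0.le]
    rw [hsplit, mul_inv]
    have hkey : ((p:ℝ)-2)⁻¹ ≤ 3 * (p:ℝ)⁻¹ := by
      rw [inv_eq_one_div, ← div_eq_mul_inv, div_le_div_iff₀ hp2 hp0]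
      linarith
    calc 2 * (((p:ℝ)^δ)⁻¹ * ((p:ℝ)-2)⁻¹) ≤ 2 * (((p:ℝ)^δ)⁻¹ * (3 * (p:ℝ)⁻¹)) := by
          apply mul_le_mul_of_nonneg_left _ (by norm_num)
          exact mul_le_mul_of_nonneg_left hkey (by positivity)
      _ = 6 * (((p:ℝ)^δ)⁻¹ * (p:ℝ)⁻¹) := by ring
  calc ∏ p ∈ A, (1 + 2 * (((p:ℝ))^δ * ((p:ℝ)-2))⁻¹)
      ≤ ∏ p ∈ A, Real.exp (6 * (p:ℝ) ^ (-(1+δ))) := by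
        apply Finset.prod_le_prod
        · intro p hp
          have h3 : (3:ℝ) ≤ (p:ℝ) := by exact_mod_cast hA p hp
          have h := mul_pos (Real.rpow_pos_of_pos (by linarith : (0:ℝ) < p) δ)
            (by linarith : (0:ℝ) < (p:ℝ) - 2)
          have := inv_nonneg.mpr h.le
          linarith
        · intro p hp
          calc 1 + 2 * (((p:ℝ))^δ * ((p:ℝ)-2))⁻¹ ≤ 1 + 6 * (p:ℝ) ^ (-(1+δ)) := by
                linarith [hterm p hp]
            _ ≤ Real.exp (6 * (p:ℝ) ^ (-(1+δ))) := by
                linarith [Real.add_one_le_exp (6 * (p:ℝ) ^ (-(1+δ)))]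
    _ = Real.exp (∑ p ∈ A, 6 * (p:ℝ) ^ (-(1+δ))) := (Real.exp_sum A _).symm
    _ ≤ Real.exp (6/δ) := by
        apply Real.exp_le_exp.mpr
        have hsb := aux_sum_bound hδ hδ' A (fun p hp => by linarith [hA p hp])
        calc ∑ p ∈ A, 6 * (p:ℝ) ^ (-(1+δ)) = 6 * ∑ p ∈ A, (p:ℝ) ^ (-(1+δ)) := by
              rw [Finset.mul_sum]
          _ ≤ 6 * (1/δ) := by
              apply mul_le_mul_of_nonneg_left hsb (by norm_num)
          _ = 6/δ := by ring

lemma primes_prod_dvd_iff {s : Finset ℕ} (hs : ∀ p ∈ s, p.Prime) (n : ℕ) :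
    (∏ p ∈ s, p) ∣ n ↔ ∀ p ∈ s, p ∣ n := by
  constructor
  · intro h p hp
    exact dvd_trans (Finset.dvd_prod_of_mem _ hp) h
  · intro h
    exact Finset.prod_primes_dvd n (fun p hp => (hs p hp).prime) h

lemma prod_primes_pos {s : Finset ℕ} (hs : ∀ p ∈ s, p.Prime) : 0 < ∏ p ∈ s, p :=
  Finset.prod_pos (fun p hp => (hs p hp).pos)

lemma aux_sigma_lb {δ : ℝ} (hδ : 0 < δ) {b : ℕ} (hb : 0 < b) :
    ∏ p ∈ b.primeFactors, (1 + (p:ℝ)^(-δ)) ≤ sigmaNeg δ b := by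
  have hBp : ∀ p ∈ b.primeFactors, p.Prime := fun p hp => Nat.prime_of_mem_primeFactors hp
  have expand : ∏ p ∈ b.primeFactors, (1 + (p:ℝ)^(-δ))
      = ∑ T ∈ b.primeFactors.powerset, ((∏ p ∈ T, p : ℕ) : ℝ)^(-δ) := by
    have : ∀ p ∈ b.primeFactors, (1 + (p:ℝ)^(-δ)) = ((p:ℝ)^(-δ) + 1) := fun p _ => by ring
    rw [Finset.prod_congr rfl this, Finset.prod_add]
    apply Finset.sum_congr rfl
    intro T hT
    rw [Finset.prod_const_one, mul_one, Nat.cast_prod,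
      ← Real.finset_prod_rpow T _ (fun p _ => by positivity) (-δ)]
  rw [expand]
  have inj : ∀ T ∈ b.primeFactors.powerset, ∀ T' ∈ b.primeFactors.powerset,
      (∏ p ∈ T, p) = (∏ p ∈ T', p) → T = T' := by
    intro T hT T' hT' h
    have h1 := Nat.primeFactors_prod (s := T) (fun p hp => hBp p (Finset.mem_powerset.mp hT hp))
    have h2 := Nat.primeFactors_prod (s := T') (fun p hp => hBp p (Finset.mem_powerset.mp hT' hp))
    rw [← h1, ← h2, h]
  have himg : ∑ k ∈ (b.primeFactors.powerset.image (fun T => ∏ p ∈ T, p)), ((k:ℕ):ℝ)^(-δ)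
      = ∑ T ∈ b.primeFactors.powerset, ((∏ p ∈ T, p : ℕ):ℝ)^(-δ) := Finset.sum_image inj
  rw [← himg]
  apply Finset.sum_le_sum_of_subset_of_nonneg
  · intro k hk
    simp only [Finset.mem_image] at hk
    obtain ⟨T, hT, rfl⟩ := hk
    rw [Nat.mem_divisors]
    refine ⟨?_, hb.ne'⟩
    exact (primes_prod_dvd_iff (fun p hp => hBp p (Finset.mem_powerset.mp hT hp)) b).mpr
      (fun p hp => Nat.dvd_of_mem_primeFactors (Finset.mem_powerset.mp hT hp))
  · intro k _ _; positivity

lemma aux_floor_err {δ : ℝ} (hδ : 0 < δ) (hδ' : δ ≤ 1) {t : ℝ} (ht : 0 ≤ t) :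
    |((⌊t⌋₊ : ℕ) : ℝ) - t| ≤ t ^ δ := by
  rcases lt_or_ge t 1 with h | h
  · rw [Nat.floor_eq_zero.mpr h]
    simp only [Nat.cast_zero, zero_sub, abs_neg, abs_of_nonneg ht]
    rcases eq_or_lt_of_le ht with rfl | ht0
    · rw [Real.zero_rpow hδ.ne']
    · calc t = t ^ (1:ℝ) := (Real.rpow_one t).symm
        _ ≤ t ^ δ := Real.rpow_le_rpow_of_exponent_ge ht0 h.le hδ'
  · have h1 : ((⌊t⌋₊:ℕ):ℝ) ≤ t := Nat.floor_le ht
    have h2 : t - 1 < ((⌊t⌋₊:ℕ):ℝ) := Nat.sub_one_lt_floor t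
    have : |((⌊t⌋₊:ℕ):ℝ) - t| ≤ 1 := by
      rw [abs_le]; constructor <;> linarith
    calc |((⌊t⌋₊:ℕ):ℝ) - t| ≤ 1 := this
      _ = (1:ℝ) ^ δ := (Real.one_rpow δ).symm
      _ ≤ t ^ δ := Real.rpow_le_rpow (by norm_num) h hδ.le

lemma sum_ind (N : ℕ) {m : ℕ} (hm : 0 < m) :
    ∑ n ∈ Finset.Icc 1 N, (if m ∣ n then (1:ℝ) else 0) = ((N / m : ℕ) : ℝ) := by
  rw [Finset.sum_boole]
  norm_num
  rw [show Finset.Icc 1 N = Finset.Ioc 0 N from (Finset.Icc_add_one_left_eq_Ioc 0 N)]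
  exact_mod_cast Nat.Ioc_filter_dvd_card_eq_div N m

lemma coprime_expand {b : ℕ} (hb : 0 < b) {n : ℕ} (hn : 0 < n) :
    (if Nat.gcd n b = 1 then (1:ℝ) else 0) =
      ∑ T ∈ b.primeFactors.powerset, (-1:ℝ)^T.card * (if (∏ p ∈ T, p) ∣ n then 1 else 0) := by
  have hBp : ∀ p ∈ b.primeFactors, p.Prime := fun p hp => Nat.prime_of_mem_primeFactors hp
  have step1 : ∀ T ∈ b.primeFactors.powerset,
      (-1:ℝ)^T.card * (if (∏ p ∈ T, p) ∣ n then 1 else 0)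
        = (∏ p ∈ T, (-(if p ∣ n then (1:ℝ) else 0))) * ∏ p ∈ b.primeFactors \ T, (1:ℝ) := by
    intro T hT
    rw [Finset.prod_const_one, mul_one]
    have : ∀ p ∈ T, (-(if p ∣ n then (1:ℝ) else 0)) = (-1) * (if p ∣ n then (1:ℝ) else 0) :=
      fun p _ => by ring
    rw [Finset.prod_congr rfl this, Finset.prod_mul_distrib, Finset.prod_const,
      Finset.prod_boole]
    congr 2
    rw [eq_iff_iff]
    exact primes_prod_dvd_iff (fun p hp => hBp p (Finset.mem_powerset.mp hT hp)) n
  rw [Finset.sum_congr rfl step1, ← Finset.prod_add]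
  have step2 : ∀ p ∈ b.primeFactors,
      (-(if p ∣ n then (1:ℝ) else 0) + 1) = (if p ∣ n then (0:ℝ) else 1) := by
    intro p _; split_ifs <;> ring
  rw [Finset.prod_congr rfl step2]
  by_cases hcop : Nat.gcd n b = 1
  · rw [if_pos hcop, Finset.prod_eq_one]
    intro p hp
    rw [if_neg]
    intro hpn
    have hpg : p ∣ Nat.gcd n b := Nat.dvd_gcd hpn (Nat.dvd_of_mem_primeFactors hp)
    rw [hcop] at hpg
    exact (hBp p hp).ne_one (Nat.dvd_one.mp hpg)
  · rw [if_neg hcop]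
    obtain ⟨p, hp, hpn, hpb⟩ := Nat.Prime.not_coprime_iff_dvd.mp hcop
    have hpB : p ∈ b.primeFactors := Nat.mem_primeFactors.mpr ⟨hp, hpb, hb.ne'⟩
    exact (Finset.prod_eq_zero hpB (by rw [if_pos hpn])).symm

lemma mem_A_facts {a p : ℕ} (hp : p ∈ a.primeFactors.erase 2) :
    p.Prime ∧ p ∣ a ∧ p ≠ 2 ∧ 3 ≤ p := by
  obtain ⟨hne, hmem⟩ := Finset.mem_erase.mp hp
  have hpr := Nat.prime_of_mem_primeFactors hmem
  exact ⟨hpr, Nat.dvd_of_mem_primeFactors hmem, hne, by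
    rcases hpr.two_le.lt_or_eq with h | h
    · omega
    · omega⟩

lemma phiCirc_inv_eq {m : ℕ} (hm : 0 < m) :
    (phiCirc m)⁻¹ = ∏ p ∈ m.primeFactors.erase 2, (1 + ((p:ℝ)-2)⁻¹) := by
  unfold phiCirc
  rw [← Finset.prod_inv_distrib]
  apply Finset.prod_congr rfl
  intro p hp
  have h3 : 3 ≤ p := (mem_A_facts hp).2.2.2
  have h3' : (3:ℝ) ≤ (p:ℝ) := by exact_mod_cast h3
  have h1 : (p:ℝ) - 1 ≠ 0 := by linarith
  have h2 : (p:ℝ) - 2 ≠ 0 := by linarith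
  have e1 : 1 - 1/((p:ℝ)-1) = ((p:ℝ)-2)/((p:ℝ)-1) := by field_simp; ring
  rw [e1, inv_div, div_eq_iff h2, add_mul, one_mul, inv_mul_cancel₀ h2]
  ring

lemma phiCirc_expand {a : ℕ} (ha : 0 < a) {n : ℕ} (hn : 0 < n) :
    (phiCirc (Nat.gcd a n))⁻¹ =
      ∑ S ∈ (a.primeFactors.erase 2).powerset,
        (∏ p ∈ S, ((p:ℝ)-2)⁻¹) * (if (∏ p ∈ S, p) ∣ n then 1 else 0) := by
  set g := Nat.gcd a n with hgdef
  have hg : 0 < g := Nat.gcd_pos_of_pos_left n ha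
  set M := g.primeFactors.erase 2 with hMdef
  set A := a.primeFactors.erase 2 with hAdef
  have hMA : M ⊆ A := by
    apply Finset.erase_subset_erase
    exact Nat.primeFactors_mono (Nat.gcd_dvd_left a n) ha.ne'
  have step1 : (phiCirc g)⁻¹ = ∑ S ∈ M.powerset, ∏ p ∈ S, ((p:ℝ)-2)⁻¹ := by
    rw [phiCirc_inv_eq hg]
    have : ∀ p ∈ M, (1 + ((p:ℝ)-2)⁻¹) = (((p:ℝ)-2)⁻¹ + 1) := fun p _ => by ring
    rw [Finset.prod_congr rfl this, Finset.prod_add]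
    exact Finset.sum_congr rfl fun S _ => by rw [Finset.prod_const_one, mul_one]
  rw [step1]
  have e2 : ∑ S ∈ A.powerset, (∏ p ∈ S, ((p:ℝ)-2)⁻¹) * (if (∏ p ∈ S, p) ∣ n then 1 else 0)
      = ∑ S ∈ M.powerset, (∏ p ∈ S, ((p:ℝ)-2)⁻¹) * (if (∏ p ∈ S, p) ∣ n then 1 else 0) := by
    symm
    apply Finset.sum_subset (Finset.powerset_mono.mpr hMA)
    intro S hSA hSM
    rw [if_neg, mul_zero]
    intro hdvd
    apply hSM
    rw [Finset.mem_powerset]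
    intro p hp
    have hpA := Finset.mem_powerset.mp hSA hp
    obtain ⟨hpr, hpa, hp2, -⟩ := mem_A_facts hpA
    have hpn : p ∣ n := dvd_trans (Finset.dvd_prod_of_mem _ hp) hdvd
    rw [hMdef]
    exact Finset.mem_erase.mpr ⟨hp2, Nat.mem_primeFactors.mpr ⟨hpr, Nat.dvd_gcd hpa hpn, hg.ne'⟩⟩
  rw [e2]
  apply Finset.sum_congr rfl
  intro S hS
  have hSM := Finset.mem_powerset.mp hS
  rw [if_pos, mul_one]
  apply (primes_prod_dvd_iff (fun p hp => (mem_A_facts (hMA (hSM hp))).1) n).mpr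
  intro p hp
  exact dvd_trans (Nat.dvd_of_mem_primeFactors (Finset.mem_of_mem_erase (hSM hp)))
    (Nat.gcd_dvd_right a n)

lemma psi_expand {a b : ℕ} (ha : 0 < a) (hb : 0 < b) {n : ℕ} (hn : 0 < n) :
    psiab a b n = ∑ S ∈ (a.primeFactors.erase 2).powerset, ∑ T ∈ b.primeFactors.powerset,
      ((∏ p ∈ S, ((p:ℝ)-2)⁻¹) * (-1:ℝ)^T.card) * (if (∏ p ∈ S ∪ T, p) ∣ n then 1 else 0) := by
  have h0 : psiab a b n = (phiCirc (Nat.gcd a n))⁻¹ * (if Nat.gcd n b = 1 then (1:ℝ) else 0) := by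
    unfold psiab; split_ifs <;> simp
  rw [h0, phiCirc_expand ha hn, coprime_expand hb hn, Finset.sum_mul_sum]
  apply Finset.sum_congr rfl
  intro S hS
  apply Finset.sum_congr rfl
  intro T hT
  have hSp : ∀ p ∈ S, p.Prime := fun p hp => (mem_A_facts (Finset.mem_powerset.mp hS hp)).1
  have hTp : ∀ p ∈ T, p.Prime := fun p hp =>
    Nat.prime_of_mem_primeFactors (Finset.mem_powerset.mp hT hp)
  have hUp : ∀ p ∈ S ∪ T, p.Prime := by
    intro p hp
    rcases Finset.mem_union.mp hp with h | h
    · exact hSp p h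
    · exact hTp p h
  have hiff : (∏ p ∈ S ∪ T, p) ∣ n ↔ ((∏ p ∈ S, p) ∣ n ∧ (∏ p ∈ T, p) ∣ n) := by
    rw [primes_prod_dvd_iff hUp, primes_prod_dvd_iff hSp, primes_prod_dvd_iff hTp]
    constructor
    · intro h
      exact ⟨fun p hp => h p (Finset.mem_union_left _ hp),
        fun p hp => h p (Finset.mem_union_right _ hp)⟩
    · intro ⟨h1, h2⟩ p hp
      rcases Finset.mem_union.mp hp with h | h
      · exact h1 p h
      · exact h2 p h
  by_cases h1 : (∏ p ∈ S, p) ∣ n <;> by_cases h2 : (∏ p ∈ T, p) ∣ n <;>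
    simp [h1, h2, hiff] <;> ring

lemma union_prod_split (f : ℕ → ℝ) (S T : Finset ℕ) :
    ∏ p ∈ S ∪ T, f p = (∏ p ∈ S, f p) * ∏ p ∈ T, (if p ∈ S then 1 else f p) := by
  rw [← Finset.union_sdiff_self_eq_union, Finset.prod_union Finset.disjoint_sdiff]
  congr 1
  rw [Finset.prod_ite, Finset.prod_const_one, one_mul, Finset.sdiff_eq_filter]

lemma main_identity {a b : ℕ} (ha : 0 < a) (hb : 0 < b) :
    ∑ S ∈ (a.primeFactors.erase 2).powerset, ∑ T ∈ b.primeFactors.powerset,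
      ((∏ p ∈ S, ((p:ℝ)-2)⁻¹) * (-1:ℝ)^T.card) * (((∏ p ∈ S ∪ T, p : ℕ) : ℝ))⁻¹
      = PsiMain a b := by
  set A := a.primeFactors.erase 2 with hAdef
  set B := b.primeFactors with hBdef
  have inner : ∀ S ∈ A.powerset,
      ∑ T ∈ B.powerset, ((∏ p ∈ S, ((p:ℝ)-2)⁻¹) * (-1:ℝ)^T.card) * (((∏ p ∈ S ∪ T, p : ℕ) : ℝ))⁻¹
      = (∏ p ∈ S, (((p:ℝ)-2)⁻¹ * (p:ℝ)⁻¹)) * ∏ p ∈ B, (if p ∈ S then (0:ℝ) else 1 - (p:ℝ)⁻¹) := by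
    intro S _
    have e1 : ∀ T ∈ B.powerset,
        ((∏ p ∈ S, ((p:ℝ)-2)⁻¹) * (-1:ℝ)^T.card) * (((∏ p ∈ S ∪ T, p : ℕ) : ℝ))⁻¹
        = (∏ p ∈ S, (((p:ℝ)-2)⁻¹ * (p:ℝ)⁻¹)) *
          ∏ p ∈ T, (-(if p ∈ S then (1:ℝ) else (p:ℝ)⁻¹)) := by
      intro T _
      have c1 : (((∏ p ∈ S ∪ T, p : ℕ) : ℝ))⁻¹ = ∏ p ∈ S ∪ T, ((p:ℝ))⁻¹ := by
        rw [Nat.cast_prod, ← Finset.prod_inv_distrib]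
      rw [c1, union_prod_split (fun p => ((p:ℝ))⁻¹) S T]
      have c2 : ∀ p ∈ T, (-(if p ∈ S then (1:ℝ) else (p:ℝ)⁻¹))
          = (-1) * (if p ∈ S then (1:ℝ) else (p:ℝ)⁻¹) := fun p _ => by ring
      have c3 : ∏ p ∈ T, (-(if p ∈ S then (1:ℝ) else (p:ℝ)⁻¹))
          = (-1:ℝ)^T.card * ∏ p ∈ T, (if p ∈ S then (1:ℝ) else (p:ℝ)⁻¹) := by
        rw [Finset.prod_congr rfl c2, Finset.prod_mul_distrib, Finset.prod_const]
      rw [c3, Finset.prod_mul_distrib]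
      ring
    rw [Finset.sum_congr rfl e1, ← Finset.mul_sum]
    congr 1
    have e2 : ∀ p ∈ B, (-(if p ∈ S then (1:ℝ) else (p:ℝ)⁻¹) + 1)
        = (if p ∈ S then (0:ℝ) else 1 - (p:ℝ)⁻¹) := by
      intro p _; split_ifs <;> ring
    rw [← Finset.prod_congr rfl e2, Finset.prod_add]
    exact (Finset.sum_congr rfl fun T _ => by rw [Finset.prod_const_one, mul_one]).symm
  rw [Finset.sum_congr rfl inner]
  have hsub : (A \ B).powerset ⊆ A.powerset := Finset.powerset_mono.mpr (Finset.sdiff_subset)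
  rw [← Finset.sum_subset hsub]
  · have e3 : ∀ S ∈ (A \ B).powerset,
        (∏ p ∈ S, (((p:ℝ)-2)⁻¹ * (p:ℝ)⁻¹)) * ∏ p ∈ B, (if p ∈ S then (0:ℝ) else 1 - (p:ℝ)⁻¹)
        = (∏ p ∈ S, (((p:ℝ)-2)⁻¹ * (p:ℝ)⁻¹)) * phiStar b := by
      intro S hS
      congr 1
      have hSB : ∀ p ∈ B, p ∉ S := by
        intro p hpB hpS
        exact (Finset.mem_sdiff.mp (Finset.mem_powerset.mp hS hpS)).2 hpB
      unfold phiStar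
      apply Finset.prod_congr hBdef
      intro p hp
      rw [hBdef] at hSB
      rw [if_neg (hSB p hp), one_div]
    rw [Finset.sum_congr rfl e3, ← Finset.sum_mul]
    have e4 : ∑ S ∈ (A \ B).powerset, ∏ p ∈ S, (((p:ℝ)-2)⁻¹ * (p:ℝ)⁻¹)
        = ∏ p ∈ A \ B, (1 + 1/((p:ℝ) * ((p:ℝ)-2))) := by
      have : ∀ p ∈ A \ B, (1 + 1/((p:ℝ) * ((p:ℝ)-2))) = (((p:ℝ)-2)⁻¹ * (p:ℝ)⁻¹ + 1) := by
        intro p _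
        rw [one_div, mul_inv]
        ring
      rw [Finset.prod_congr rfl this, Finset.prod_add]
      exact (Finset.sum_congr rfl fun S _ => by rw [Finset.prod_const_one, mul_one]).symm
    rw [e4]
    -- now show PsiMain equals this
    have hG : (Nat.gcd a b).primeFactors.erase 2 = A ∩ B := by
      rw [Nat.primeFactors_gcd ha.ne' hb.ne', hAdef, hBdef, Finset.erase_inter]
    unfold PsiMain phiFlat
    rw [hG, ← hAdef]
    have hsplit : ∏ p ∈ A, (1 + 1/((p:ℝ) * ((p:ℝ)-2)))
        = (∏ p ∈ A \ B, (1 + 1/((p:ℝ) * ((p:ℝ)-2)))) * ∏ p ∈ A ∩ B, (1 + 1/((p:ℝ) * ((p:ℝ)-2))) := by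
      rw [← Finset.sdiff_inter_self_left A B]
      exact (Finset.prod_sdiff (Finset.inter_subset_left)).symm
    have hne : ∏ p ∈ A ∩ B, (1 + 1/((p:ℝ) * ((p:ℝ)-2))) ≠ 0 := by
      apply ne_of_gt
      apply Finset.prod_pos
      intro p hp
      have h3 : 3 ≤ p := (mem_A_facts (Finset.mem_inter.mp hp).1).2.2.2
      have h3' : (3:ℝ) ≤ (p:ℝ) := by exact_mod_cast h3
      have : (0:ℝ) < (p:ℝ) * ((p:ℝ)-2) := by nlinarith
      positivity
    rw [hsplit]
    field_simp
  · intro S hSA hSnot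
    have : ∃ p ∈ S, p ∈ B := by
      by_contra hcon
      push_neg at hcon
      apply hSnot
      rw [Finset.mem_powerset]
      intro p hp
      exact Finset.mem_sdiff.mpr ⟨Finset.mem_powerset.mp hSA hp, hcon p hp⟩
    obtain ⟨p, hpS, hpB⟩ := this
    apply mul_eq_zero_of_right
    exact Finset.prod_eq_zero hpB (by rw [if_pos hpS])

lemma err_bound {δ : ℝ} (hδ : 0 < δ) (hδ' : δ ≤ 1) {a b : ℕ} (ha : 0 < a) (hb : 0 < b) :
    ∑ S ∈ (a.primeFactors.erase 2).powerset, ∑ T ∈ b.primeFactors.powerset,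
      (∏ p ∈ S, ((p:ℝ)-2)⁻¹) * ∏ p ∈ S ∪ T, (p:ℝ)^(-δ)
      ≤ Real.exp (6/δ) * sigmaNeg δ (a*b) := by
  set A := a.primeFactors.erase 2 with hAdef
  set B := b.primeFactors with hBdef
  have hS3 : ∀ S ∈ A.powerset, ∀ p ∈ S, 3 ≤ p :=
    fun S hS p hp => (mem_A_facts (Finset.mem_powerset.mp hS hp)).2.2.2
  have hBnn : (0:ℝ) ≤ ∏ p ∈ B, (1 + (p:ℝ)^(-δ)) := by
    apply Finset.prod_nonneg; intro p _; positivity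
  have inner : ∀ S ∈ A.powerset,
      ∑ T ∈ B.powerset, (∏ p ∈ S, ((p:ℝ)-2)⁻¹) * ∏ p ∈ S ∪ T, (p:ℝ)^(-δ)
      ≤ (∏ p ∈ S, (2 * (((p:ℝ)-2)⁻¹ * (p:ℝ)^(-δ)))) * ∏ p ∈ B, (1 + (p:ℝ)^(-δ)) := by
    intro S hS
    have hSnn : (0:ℝ) ≤ ∏ p ∈ S, (((p:ℝ)-2)⁻¹ * (p:ℝ)^(-δ)) := by
      apply Finset.prod_nonneg
      intro p hp
      have : (3:ℝ) ≤ (p:ℝ) := by exact_mod_cast hS3 S hS p hp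
      have h2 : (0:ℝ) < (p:ℝ) - 2 := by linarith
      positivity
    have e1 : ∀ T ∈ B.powerset,
        (∏ p ∈ S, ((p:ℝ)-2)⁻¹) * ∏ p ∈ S ∪ T, (p:ℝ)^(-δ)
        = (∏ p ∈ S, (((p:ℝ)-2)⁻¹ * (p:ℝ)^(-δ))) *
          ∏ p ∈ T, (if p ∈ S then (1:ℝ) else (p:ℝ)^(-δ)) := by
      intro T _
      rw [union_prod_split (fun p => (p:ℝ)^(-δ)) S T, Finset.prod_mul_distrib]
      ring
    rw [Finset.sum_congr rfl e1, ← Finset.mul_sum]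
    have hsum : ∑ T ∈ B.powerset, ∏ p ∈ T, (if p ∈ S then (1:ℝ) else (p:ℝ)^(-δ))
        ≤ 2^S.card * ∏ p ∈ B, (1 + (p:ℝ)^(-δ)) := by
      have expand : ∑ T ∈ B.powerset, ∏ p ∈ T, (if p ∈ S then (1:ℝ) else (p:ℝ)^(-δ))
          = ∏ p ∈ B, ((if p ∈ S then (1:ℝ) else (p:ℝ)^(-δ)) + 1) := by
        rw [Finset.prod_add]
        exact (Finset.sum_congr rfl fun T _ => by rw [Finset.prod_const_one, mul_one]).symm
      rw [expand]
      calc ∏ p ∈ B, ((if p ∈ S then (1:ℝ) else (p:ℝ)^(-δ)) + 1)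
          ≤ ∏ p ∈ B, ((if p ∈ S then (2:ℝ) else 1) * (1 + (p:ℝ)^(-δ))) := by
            apply Finset.prod_le_prod
            · intro p _; split_ifs <;> positivity
            · intro p _
              have hnn : (0:ℝ) ≤ (p:ℝ)^(-δ) := by positivity
              split_ifs <;> nlinarith
        _ = (∏ p ∈ B, (if p ∈ S then (2:ℝ) else 1)) * ∏ p ∈ B, (1 + (p:ℝ)^(-δ)) :=
            Finset.prod_mul_distrib
        _ ≤ 2^S.card * ∏ p ∈ B, (1 + (p:ℝ)^(-δ)) := by
            apply mul_le_mul_of_nonneg_right _ hBnn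
            rw [Finset.prod_ite, Finset.prod_const, Finset.prod_const, one_pow, mul_one]
            have hcard : (B.filter (· ∈ S)).card ≤ S.card :=
              Finset.card_le_card (fun p hp => (Finset.mem_filter.mp hp).2)
            calc (2:ℝ) ^ (B.filter (· ∈ S)).card ≤ (2:ℝ) ^ S.card :=
                  pow_le_pow_right₀ (by norm_num) hcard
              _ = 2^S.card := rfl
    calc (∏ p ∈ S, (((p:ℝ)-2)⁻¹ * (p:ℝ)^(-δ))) *
          ∑ T ∈ B.powerset, ∏ p ∈ T, (if p ∈ S then (1:ℝ) else (p:ℝ)^(-δ))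
        ≤ (∏ p ∈ S, (((p:ℝ)-2)⁻¹ * (p:ℝ)^(-δ))) * (2^S.card * ∏ p ∈ B, (1 + (p:ℝ)^(-δ))) :=
          mul_le_mul_of_nonneg_left hsum hSnn
      _ = (∏ p ∈ S, (2 * (((p:ℝ)-2)⁻¹ * (p:ℝ)^(-δ)))) * ∏ p ∈ B, (1 + (p:ℝ)^(-δ)) := by
          have e6 : ∏ p ∈ S, (2 * (((p:ℝ)-2)⁻¹ * (p:ℝ)^(-δ)))
              = 2^S.card * ((∏ p ∈ S, ((p:ℝ)-2)⁻¹) * ∏ p ∈ S, (p:ℝ)^(-δ)) := by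
            rw [Finset.prod_mul_distrib, Finset.prod_const, Finset.prod_mul_distrib]
          rw [e6, Finset.prod_mul_distrib]
          ring
  calc ∑ S ∈ A.powerset, ∑ T ∈ B.powerset,
        (∏ p ∈ S, ((p:ℝ)-2)⁻¹) * ∏ p ∈ S ∪ T, (p:ℝ)^(-δ)
      ≤ ∑ S ∈ A.powerset, (∏ p ∈ S, (2 * (((p:ℝ)-2)⁻¹ * (p:ℝ)^(-δ)))) *
          ∏ p ∈ B, (1 + (p:ℝ)^(-δ)) := Finset.sum_le_sum inner
    _ = (∏ p ∈ A, (1 + 2 * (((p:ℝ))^δ * ((p:ℝ)-2))⁻¹)) * ∏ p ∈ B, (1 + (p:ℝ)^(-δ)) := by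
        rw [← Finset.sum_mul]
        congr 1
        have e5 : ∀ p ∈ A, (1 + 2 * (((p:ℝ))^δ * ((p:ℝ)-2))⁻¹)
            = (2 * (((p:ℝ)-2)⁻¹ * (p:ℝ)^(-δ)) + 1) := by
          intro p hp
          have h3 : (3:ℝ) ≤ (p:ℝ) := by exact_mod_cast (mem_A_facts hp).2.2.2
          rw [Real.rpow_neg (by linarith) δ, mul_inv]
          ring
        rw [Finset.prod_congr rfl e5, Finset.prod_add]
        exact (Finset.sum_congr rfl fun S _ => by rw [Finset.prod_const_one, mul_one]).symm
    _ ≤ Real.exp (6/δ) * sigmaNeg δ (a*b) := by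
        apply mul_le_mul
        · exact aux_prod_A hδ hδ' A (fun p hp => (mem_A_facts hp).2.2.2)
        · calc ∏ p ∈ B, (1 + (p:ℝ)^(-δ)) ≤ sigmaNeg δ b := aux_sigma_lb hδ hb
            _ ≤ sigmaNeg δ (a*b) := by
              unfold sigmaNeg
              apply Finset.sum_le_sum_of_subset_of_nonneg
              · exact Nat.divisors_subset_of_dvd (Nat.mul_ne_zero ha.ne' hb.ne') (dvd_mul_left b a)
              · intro k _ _; positivity
        · exact hBnn
        · positivity

lemma term_bound {δ X : ℝ} (hδ : 0 < δ) (hδ' : δ ≤ 1) (hX : 1 ≤ X) {m : ℕ} (hm : 0 < m) :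
    |((⌊X⌋₊ / m : ℕ):ℝ) - X * ((m:ℝ))⁻¹| ≤ X^δ * (((m:ℝ))^δ)⁻¹ := by
  have hm' : (0:ℝ) < (m:ℝ) := by exact_mod_cast hm
  have hX0 : (0:ℝ) < X := by linarith
  have e1 : X * ((m:ℝ))⁻¹ = X / m := (div_eq_mul_inv X _).symm
  have e2 : (⌊X⌋₊ / m : ℕ) = ⌊X / (m:ℝ)⌋₊ := (Nat.floor_div_natCast X m).symm
  rw [e1, e2]
  calc |((⌊X / (m:ℝ)⌋₊ : ℕ):ℝ) - X/m| ≤ (X/m)^δ :=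
        aux_floor_err hδ hδ' (by positivity)
    _ = X^δ * (((m:ℝ))^δ)⁻¹ := by
        rw [Real.div_rpow hX0.le hm'.le, div_eq_mul_inv]

lemma cast_prod_rpow (δ : ℝ) (S : Finset ℕ) :
    ((((∏ p ∈ S, p : ℕ)):ℝ)^δ)⁻¹ = ∏ p ∈ S, (p:ℝ)^(-δ) := by
  rw [Nat.cast_prod, ← Real.finset_prod_rpow S _ (fun p _ => (p:ℕ).cast_nonneg) δ,
    ← Finset.prod_inv_distrib]
  exact Finset.prod_congr rfl fun p _ => (Real.rpow_neg (p:ℕ).cast_nonneg δ).symm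

theorem stmt_3 (δ : ℝ) (hδ : 0 < δ) (hδ' : δ ≤ 1) :
    ∃ C : ℝ, 0 < C ∧ ∀ a b : ℕ, 0 < a → 0 < b → ∀ X : ℝ, 1 ≤ X →
      |(∑ n ∈ Finset.Icc 1 ⌊X⌋₊, psiab a b n) - PsiMain a b * X| ≤
        C * sigmaNeg δ (a * b) * X ^ δ := by
  refine ⟨Real.exp (6/δ), Real.exp_pos _, ?_⟩
  intro a b ha hb X hX
  set A := a.primeFactors.erase 2 with hAdef
  set B := b.primeFactors with hBdef
  set N := ⌊X⌋₊ with hNdef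
  have hX0 : (0:ℝ) < X := by linarith
  have hUprime : ∀ S ∈ A.powerset, ∀ T ∈ B.powerset, ∀ p ∈ S ∪ T, p.Prime := by
    intro S hS T hT p hp
    rcases Finset.mem_union.mp hp with h | h
    · exact (mem_A_facts (Finset.mem_powerset.mp hS h)).1
    · exact Nat.prime_of_mem_primeFactors (Finset.mem_powerset.mp hT h)
  -- Step 1 : expand the sum
  have hsum : ∑ n ∈ Finset.Icc 1 N, psiab a b n
      = ∑ S ∈ A.powerset, ∑ T ∈ B.powerset,
        ((∏ p ∈ S, ((p:ℝ)-2)⁻¹) * (-1:ℝ)^T.card) * ((N / (∏ p ∈ S ∪ T, p) : ℕ):ℝ) := by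
    rw [Finset.sum_congr rfl (fun n hn => psi_expand ha hb (Finset.mem_Icc.mp hn).1)]
    rw [Finset.sum_comm]
    apply Finset.sum_congr rfl
    intro S hS
    rw [Finset.sum_comm]
    apply Finset.sum_congr rfl
    intro T hT
    rw [← Finset.mul_sum]
    congr 1
    exact sum_ind N (prod_primes_pos (hUprime S hS T hT))
  -- Step 2 : main term
  have hmain : PsiMain a b * X = ∑ S ∈ A.powerset, ∑ T ∈ B.powerset,
      ((∏ p ∈ S, ((p:ℝ)-2)⁻¹) * (-1:ℝ)^T.card) * (X * (((∏ p ∈ S ∪ T, p : ℕ)):ℝ)⁻¹) := by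
    rw [← main_identity ha hb, Finset.sum_mul]
    apply Finset.sum_congr rfl
    intro S _
    rw [Finset.sum_mul]
    exact Finset.sum_congr rfl fun T _ => by ring
  rw [hsum, hmain, ← Finset.sum_sub_distrib]
  have e0 : ∀ S ∈ A.powerset,
      (∑ T ∈ B.powerset,
        ((∏ p ∈ S, ((p:ℝ)-2)⁻¹) * (-1:ℝ)^T.card) * ((N / (∏ p ∈ S ∪ T, p) : ℕ):ℝ)
      - ∑ T ∈ B.powerset,
        ((∏ p ∈ S, ((p:ℝ)-2)⁻¹) * (-1:ℝ)^T.card) * (X * (((∏ p ∈ S ∪ T, p : ℕ)):ℝ)⁻¹))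
      = ∑ T ∈ B.powerset,
        (((∏ p ∈ S, ((p:ℝ)-2)⁻¹) * (-1:ℝ)^T.card) * ((N / (∏ p ∈ S ∪ T, p) : ℕ):ℝ)
        - ((∏ p ∈ S, ((p:ℝ)-2)⁻¹) * (-1:ℝ)^T.card) * (X * (((∏ p ∈ S ∪ T, p : ℕ)):ℝ)⁻¹)) :=
    fun S _ => (Finset.sum_sub_distrib _ _).symm
  rw [Finset.sum_congr rfl e0]
  have habs : ∀ S ∈ A.powerset,
      |∑ T ∈ B.powerset,
        (((∏ p ∈ S, ((p:ℝ)-2)⁻¹) * (-1:ℝ)^T.card) * ((N / (∏ p ∈ S ∪ T, p) : ℕ):ℝ)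
        - ((∏ p ∈ S, ((p:ℝ)-2)⁻¹) * (-1:ℝ)^T.card) * (X * (((∏ p ∈ S ∪ T, p : ℕ)):ℝ)⁻¹))|
      ≤ ∑ T ∈ B.powerset,
          (∏ p ∈ S, ((p:ℝ)-2)⁻¹) * (X^δ * ∏ p ∈ S ∪ T, (p:ℝ)^(-δ)) := by
    intro S hS
    refine le_trans (Finset.abs_sum_le_sum_abs _ _) (Finset.sum_le_sum ?_)
    intro T hT
    have hm : 0 < ∏ p ∈ S ∪ T, p := prod_primes_pos (hUprime S hS T hT)
    have hSnn : (0:ℝ) ≤ ∏ p ∈ S, ((p:ℝ)-2)⁻¹ := by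
      apply Finset.prod_nonneg
      intro p hp
      have : (3:ℝ) ≤ (p:ℝ) := by
        exact_mod_cast (mem_A_facts (Finset.mem_powerset.mp hS hp)).2.2.2
      have h2 : (0:ℝ) < (p:ℝ) - 2 := by linarith
      positivity
    rw [← mul_sub, abs_mul, abs_mul, abs_pow, abs_neg, abs_one, one_pow, mul_one,
      abs_of_nonneg hSnn]
    apply mul_le_mul_of_nonneg_left _ hSnn
    calc |((N / (∏ p ∈ S ∪ T, p) : ℕ):ℝ) - X * (((∏ p ∈ S ∪ T, p : ℕ)):ℝ)⁻¹|
        ≤ X^δ * ((((∏ p ∈ S ∪ T, p : ℕ)):ℝ)^δ)⁻¹ := term_bound hδ hδ' hX hm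
      _ = X^δ * ∏ p ∈ S ∪ T, (p:ℝ)^(-δ) := by rw [cast_prod_rpow]
  calc |∑ S ∈ A.powerset, ∑ T ∈ B.powerset,
        (((∏ p ∈ S, ((p:ℝ)-2)⁻¹) * (-1:ℝ)^T.card) * ((N / (∏ p ∈ S ∪ T, p) : ℕ):ℝ)
        - ((∏ p ∈ S, ((p:ℝ)-2)⁻¹) * (-1:ℝ)^T.card) * (X * (((∏ p ∈ S ∪ T, p : ℕ)):ℝ)⁻¹))|
      ≤ ∑ S ∈ A.powerset, |∑ T ∈ B.powerset,
        (((∏ p ∈ S, ((p:ℝ)-2)⁻¹) * (-1:ℝ)^T.card) * ((N / (∏ p ∈ S ∪ T, p) : ℕ):ℝ)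
        - ((∏ p ∈ S, ((p:ℝ)-2)⁻¹) * (-1:ℝ)^T.card) * (X * (((∏ p ∈ S ∪ T, p : ℕ)):ℝ)⁻¹))| :=
        Finset.abs_sum_le_sum_abs _ _
    _ ≤ ∑ S ∈ A.powerset, ∑ T ∈ B.powerset,
          (∏ p ∈ S, ((p:ℝ)-2)⁻¹) * (X^δ * ∏ p ∈ S ∪ T, (p:ℝ)^(-δ)) :=
        Finset.sum_le_sum habs
    _ = X^δ * ∑ S ∈ A.powerset, ∑ T ∈ B.powerset,
          (∏ p ∈ S, ((p:ℝ)-2)⁻¹) * ∏ p ∈ S ∪ T, (p:ℝ)^(-δ) := by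
        rw [Finset.mul_sum]
        apply Finset.sum_congr rfl
        intro S _
        rw [Finset.mul_sum]
        exact Finset.sum_congr rfl fun T _ => by ring
    _ ≤ X^δ * (Real.exp (6/δ) * sigmaNeg δ (a*b)) := by
        apply mul_le_mul_of_nonneg_left (err_bound hδ hδ' ha hb) (by positivity)
    _ = Real.exp (6/δ) * sigmaNeg δ (a*b) * X^δ := by ring
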